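/- For every open set Ω ⊂ ℝⁿ⁺¹, the essential boundary ∂ₑΩ = ∂Ω ∖ ∂ₛΩ is a closed subset of ℝⁿ⁺¹. -/

import Mathlib

open MeasureTheory Set Filter Topology

noncomputable section

/-- Points of space-time `ℝⁿ × ℝ`. -/
abbrev Pt (n : ℕ) : Type := EuclideanSpace ℝ (Fin n) × ℝ

/-- The open parabolic cube `Q_r(c)`. -/
def pcube (n : ℕ) (c : Pt n) (r : ℝ) : Set (Pt n) :=
  {p | (∀ i, |p.1 i - c.1 i| < r) ∧ c.2 - r ^ 2 < p.2 ∧ p.2 < c.2 + r ^ 2}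

/-- The time-backward half cube `Q_r⁻(c)`. -/
def pcubeMinus (n : ℕ) (c : Pt n) (r : ℝ) : Set (Pt n) :=
  {p | (∀ i, |p.1 i - c.1 i| < r) ∧ c.2 - r ^ 2 < p.2 ∧ p.2 < c.2}

/-- The time-forward half cube `Q_r⁺(c)`. -/
def pcubePlus (n : ℕ) (c : Pt n) (r : ℝ) : Set (Pt n) :=
  {p | (∀ i, |p.1 i - c.1 i| < r) ∧ c.2 < p.2 ∧ p.2 < c.2 + r ^ 2}

/-- The parabolic norm `‖(X,t)‖ = |X| + |t|^{1/2}`. -/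
def pnorm (n : ℕ) (p : Pt n) : ℝ := ‖p.1‖ + Real.sqrt |p.2|

/-- The parabolic distance. -/
def pdist (n : ℕ) (p q : Pt n) : ℝ := pnorm n (p.1 - q.1, p.2 - q.2)

/-- The parabolic diameter of a set (in `ℝ≥0∞`). -/
def pdiam (n : ℕ) (A : Set (Pt n)) : ENNReal :=
  ⨆ p ∈ A, ⨆ q ∈ A, ENNReal.ofReal (pdist n p q)

/-- The parabolic distance from a point to a set. -/
def pdistTo (n : ℕ) (p : Pt n) (A : Set (Pt n)) : ℝ := sInf ((pdist n p) '' A)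

/-- The parabolic boundary `𝒫Ω`. -/
def parabolicBdry (n : ℕ) (Ω : Set (Pt n)) : Set (Pt n) :=
  {p | p ∈ frontier Ω ∧ ∀ r > 0, (pcubeMinus n p r ∩ Ωᶜ).Nonempty}

/-- The bottom boundary `ℬΩ`. -/
def bottomBdry (n : ℕ) (Ω : Set (Pt n)) : Set (Pt n) :=
  {p | p ∈ parabolicBdry n Ω ∧ ∃ ε > 0, pcubePlus n p ε ⊆ Ω}

/-- The abnormal boundary `∂ₐΩ`. -/
def abnormalBdry (n : ℕ) (Ω : Set (Pt n)) : Set (Pt n) :=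
  {p | p ∈ frontier Ω ∧ ∃ ε > 0, pcubeMinus n p ε ⊆ Ω}

/-- The singular boundary `∂ₛΩ`. -/
def singBdry (n : ℕ) (Ω : Set (Pt n)) : Set (Pt n) :=
  {p | p ∈ abnormalBdry n Ω ∧ ∃ ε > 0, pcubePlus n p ε ∩ Ω = ∅}

/-- The essential boundary `∂ₑΩ = ∂Ω ∖ ∂ₛΩ`. -/
def essBdry (n : ℕ) (Ω : Set (Pt n)) : Set (Pt n) := frontier Ω \ singBdry n Ω

/-- `T_min(Ω)`, as an extended real number. -/
def parTmin (n : ℕ) (Ω : Set (Pt n)) : EReal := ⨅ p ∈ Ω, (p.2 : EReal)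

/-- `T_max(Ω)`, as an extended real number. -/
def parTmax (n : ℕ) (Ω : Set (Pt n)) : EReal := ⨆ p ∈ Ω, (p.2 : EReal)

/-- The quasi-lateral boundary `Σ`:  `∂Ω` with the time slice of `ℬΩ` at `t = T_min(Ω)`
removed (when `T_min(Ω) > -∞`), and the time slice of `∂ₛΩ` at `t = T_max(Ω)` removed
(when `T_max(Ω) < ∞`).  Since no real time coordinate can equal `±∞`, the `EReal`
formulation below encodes exactly this. -/
def quasiLateral (n : ℕ) (Ω : Set (Pt n)) : Set (Pt n) :=
  frontier Ω \
    ({p | p ∈ bottomBdry n Ω ∧ (p.2 : EReal) = parTmin n Ω} ∪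
     {p | p ∈ singBdry n Ω ∧ (p.2 : EReal) = parTmax n Ω})

/-- The free-space heat kernel. -/
def heatKernel (n : ℕ) (X : EuclideanSpace ℝ (Fin n)) (t : ℝ)
    (y : EuclideanSpace ℝ (Fin n)) (s : ℝ) : ℝ :=
  if s < t then
    (4 * Real.pi * (t - s)) ^ (-(n : ℝ) / 2) * Real.exp (-‖X - y‖ ^ 2 / (4 * (t - s)))
  else 0

/-- Time derivative `∂ₜ u`. -/
def timeDeriv (n : ℕ) (u : Pt n → ℝ) (p : Pt n) : ℝ := deriv (fun τ => u (p.1, τ)) p.2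

/-- Spatial Laplacian `Δ_X u`. -/
def spaceLaplacian (n : ℕ) (u : Pt n → ℝ) (p : Pt n) : ℝ :=
  ∑ i : Fin n,
    iteratedDeriv 2 (fun h : ℝ => u (p.1 + h • EuclideanSpace.single i (1 : ℝ), p.2)) 0

/-- A classical supersolution of the heat equation on `U`: continuous on `U`,
twice continuously differentiable in `X` and once in `t`, with `∂ₜ u - Δ_X u ≥ 0`. -/
structure IsSupersolutionOn (n : ℕ) (u : Pt n → ℝ) (U : Set (Pt n)) : Prop where
  cont : ContinuousOn u U
  smoothX : ∀ p ∈ U, ContDiffAt ℝ 2 (fun X => u (X, p.2)) p.1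
  smoothT : ∀ p ∈ U, ContDiffAt ℝ 1 (fun τ => u (p.1, τ)) p.2
  ineq : ∀ p ∈ U, spaceLaplacian n u p ≤ timeDeriv n u p

/-- A classical subsolution of the heat equation on `U`. -/
structure IsSubsolutionOn (n : ℕ) (u : Pt n → ℝ) (U : Set (Pt n)) : Prop where
  cont : ContinuousOn u U
  smoothX : ∀ p ∈ U, ContDiffAt ℝ 2 (fun X => u (X, p.2)) p.1
  smoothT : ∀ p ∈ U, ContDiffAt ℝ 1 (fun τ => u (p.1, τ)) p.2
  ineq : ∀ p ∈ U, timeDeriv n u p ≤ spaceLaplacian n u p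

/-- A caloric function (classical solution of the heat equation) on `U`. -/
structure IsCaloricOn (n : ℕ) (u : Pt n → ℝ) (U : Set (Pt n)) : Prop where
  cont : ContinuousOn u U
  smoothX : ∀ p ∈ U, ContDiffAt ℝ 2 (fun X => u (X, p.2)) p.1
  smoothT : ∀ p ∈ U, ContDiffAt ℝ 1 (fun τ => u (p.1, τ)) p.2
  eq : ∀ p ∈ U, timeDeriv n u p = spaceLaplacian n u p
lemma isOpen_pcubePlus (n : ℕ) (c : Pt n) (r : ℝ) : IsOpen (pcubePlus n c r) := by
  have h1 : IsOpen {p : Pt n | ∀ i, |p.1 i - c.1 i| < r} := by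
    have : {p : Pt n | ∀ i, |p.1 i - c.1 i| < r} =
        ⋂ i, {p : Pt n | |p.1 i - c.1 i| < r} := by
      ext p; simp [Set.mem_iInter]
    rw [this]
    refine isOpen_iInter_of_finite fun i => ?_
    have hc : Continuous fun p : Pt n => |p.1 i - c.1 i| := by
      have : Continuous fun p : Pt n => p.1 i :=
        (EuclideanSpace.proj i).continuous.comp continuous_fst
      exact (this.sub continuous_const).abs
    exact isOpen_lt hc continuous_const
  have h2 : IsOpen {p : Pt n | c.2 < p.2} := isOpen_lt continuous_const continuous_snd
  have h3 : IsOpen {p : Pt n | p.2 < c.2 + r ^ 2} :=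
    isOpen_lt continuous_snd continuous_const
  have : pcubePlus n c r =
      {p : Pt n | ∀ i, |p.1 i - c.1 i| < r} ∩
        ({p : Pt n | c.2 < p.2} ∩ {p : Pt n | p.2 < c.2 + r ^ 2}) := by
    ext p; simp [pcubePlus, and_assoc]
  rw [this]; exact h1.inter (h2.inter h3)

/-- the essential boundary is closed. -/
theorem statement_1 (n : ℕ) (Ω : Set (Pt n)) (hΩ : IsOpen Ω) :
    IsClosed (essBdry n Ω) := by
  rw [← isOpen_compl_iff, isOpen_iff_mem_nhds]
  intro p hp
  by_cases hf : p ∈ frontier Ω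
  · -- p is a singular boundary point
    have hps : p ∈ singBdry n Ω := by
      by_contra h
      exact hp ⟨hf, h⟩
    obtain ⟨⟨_, ε₁, hε₁, hminus⟩, ε₂, hε₂, hplus⟩ := hps
    set ε : ℝ := min ε₁ ε₂ with hεdef
    have hε : 0 < ε := lt_min hε₁ hε₂
    have hεle₁ : ε ≤ ε₁ := min_le_left _ _
    have hεle₂ : ε ≤ ε₂ := min_le_right _ _
    have hεsq₁ : ε ^ 2 ≤ ε₁ ^ 2 := by nlinarith
    have hεsq₂ : ε ^ 2 ≤ ε₂ ^ 2 := by nlinarith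
    -- minus and plus cubes of radius ε still work
    have hminus' : pcubeMinus n p ε ⊆ Ω := fun x hx =>
      hminus ⟨fun i => lt_of_lt_of_le (hx.1 i) hεle₁,
        lt_of_le_of_lt (by linarith) hx.2.1, hx.2.2⟩
    have hplus' : pcubePlus n p ε ∩ Ω = ∅ := by
      apply Set.eq_empty_of_subset_empty
      rw [← hplus]
      exact Set.inter_subset_inter_left _ fun x hx =>
        ⟨fun i => lt_of_lt_of_le (hx.1 i) hεle₂, hx.2.1,
          lt_of_lt_of_le hx.2.2 (by linarith)⟩
    set δ : ℝ := ε / 2 with hδdef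
    have hδ : 0 < δ := by positivity
    -- the neighborhood
    set V : Set (Pt n) :=
      {q : Pt n | (∀ i, |q.1 i - p.1 i| < δ) ∧ |q.2 - p.2| < δ ^ 2} with hVdef
    have hVopen : IsOpen V := by
      have h1 : IsOpen {q : Pt n | ∀ i, |q.1 i - p.1 i| < δ} := by
        have : {q : Pt n | ∀ i, |q.1 i - p.1 i| < δ} =
            ⋂ i, {q : Pt n | |q.1 i - p.1 i| < δ} := by
          ext q; simp [Set.mem_iInter]
        rw [this]
        refine isOpen_iInter_of_finite fun i => ?_
        have hc : Continuous fun q : Pt n => |q.1 i - p.1 i| := by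
          have : Continuous fun q : Pt n => q.1 i :=
            (EuclideanSpace.proj i).continuous.comp continuous_fst
          exact (this.sub continuous_const).abs
        exact isOpen_lt hc continuous_const
      have h2 : IsOpen {q : Pt n | |q.2 - p.2| < δ ^ 2} :=
        isOpen_lt ((continuous_snd.sub continuous_const).abs) continuous_const
      have : V = {q : Pt n | ∀ i, |q.1 i - p.1 i| < δ} ∩
          {q : Pt n | |q.2 - p.2| < δ ^ 2} := rfl
      rw [this]; exact h1.inter h2
    have hpV : p ∈ V := by
      constructor
      · intro i; simpa using hδ
      · simpa using pow_pos hδ 2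
    refine Filter.mem_of_superset (hVopen.mem_nhds hpV) ?_
    intro q hq
    by_cases hqf : q ∈ frontier Ω
    · -- show q ∈ singBdry n Ω
      intro hqe
      apply hqe.2
      have hδε : δ < ε := by
        rw [hδdef]; linarith
      have hδsqε : δ ^ 2 < ε ^ 2 := by nlinarith
      -- first: q.2 = p.2
      have hqt : q.2 = p.2 := by
        rcases lt_trichotomy q.2 p.2 with h | h | h
        · -- q would be in pcubeMinus p ε ⊆ Ω, contradicting q ∈ frontier Ω
          exfalso
          have hqΩ : q ∈ Ω := hminus' ⟨fun i => (hq.1 i).trans hδε,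
            by have := abs_lt.mp hq.2; linarith, h⟩
          have : q ∉ Ω := by
            rw [hΩ.frontier_eq] at hqf
            exact hqf.2
          exact this hqΩ
        · exact h
        · -- q would be in the open set pcubePlus p ε, disjoint from Ω,
          -- contradicting q ∈ closure Ω
          exfalso
          have hqP : q ∈ pcubePlus n p ε := ⟨fun i => (hq.1 i).trans hδε, h,
            by have := abs_lt.mp hq.2; linarith⟩
          have hqcl : q ∈ closure Ω := hqf.1
          rw [mem_closure_iff] at hqcl
          have := hqcl _ (isOpen_pcubePlus n p ε) hqP
          rw [hplus'] at this
          exact Set.not_nonempty_empty this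
      refine ⟨⟨hqf, δ, hδ, ?_⟩, δ, hδ, ?_⟩
      · -- pcubeMinus q δ ⊆ pcubeMinus p ε ⊆ Ω
        intro x hx
        refine hminus' ⟨fun i => ?_, ?_, ?_⟩
        · calc |x.1 i - p.1 i| = |(x.1 i - q.1 i) + (q.1 i - p.1 i)| := by ring_nf
            _ ≤ |x.1 i - q.1 i| + |q.1 i - p.1 i| := abs_add_le _ _
            _ < δ + δ := add_lt_add (hx.1 i) (hq.1 i)
            _ ≤ ε := by rw [hδdef]; linarith
        · have := hx.2.1; rw [hqt] at this; linarith
        · have := hx.2.2; rw [hqt] at this; exact this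
      · -- pcubePlus q δ ∩ Ω = ∅
        apply Set.eq_empty_of_subset_empty
        rw [← hplus']
        apply Set.inter_subset_inter_left
        intro x hx
        refine ⟨fun i => ?_, ?_, ?_⟩
        · calc |x.1 i - p.1 i| = |(x.1 i - q.1 i) + (q.1 i - p.1 i)| := by ring_nf
            _ ≤ |x.1 i - q.1 i| + |q.1 i - p.1 i| := abs_add_le _ _
            _ < δ + δ := add_lt_add (hx.1 i) (hq.1 i)
            _ ≤ ε := by rw [hδdef]; linarith
        · have := hx.2.1; rw [hqt] at this; exact this
        · have := hx.2.2; rw [hqt] at this; linarith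
    · exact fun hqe => hqf hqe.1
  · -- p not on the frontier: (frontier Ω)ᶜ is an open neighborhood
    refine Filter.mem_of_superset (isClosed_frontier.isOpen_compl.mem_nhds hf) ?_
    exact fun q hq hqe => hq hqe.1
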